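/- For two McNaughton functions f, g : [0,1]^k → [0,1] whose restrictions to a rational polyhedron P ⊆ [0,1]^k satisfy O(g) ∩ P ⊆ O(f) ∩ P (onesets restricted to P), there exists n ∈ ℕ such that g|_P ⊙ ⋯ ⊙ g|_P (n times) ≤ f|_P pointwise, where x⊙y = max(0, x+y−1). -/

import Mathlib

open Set

/-- The unit cube [0,1]^k. -/
def unitCube (k : ℕ) : Set (Fin k → ℝ) := {x | ∀ i, x i ∈ Icc (0:ℝ) 1}

/-- A McNaughton function on [0,1]^k: continuous, with values in [0,1], and
piecewise (affine) linear with integer coefficients. -/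
def IsMcNaughton {k : ℕ} (f : (Fin k → ℝ) → ℝ) : Prop :=
  ContinuousOn f (unitCube k) ∧
  (∀ x ∈ unitCube k, f x ∈ Icc (0:ℝ) 1) ∧
  ∃ (m : ℕ) (a : Fin m → Fin k → ℤ) (b : Fin m → ℤ),
    ∀ x ∈ unitCube k, ∃ j : Fin m, f x = (∑ i, (a j i : ℝ) * x i) + (b j : ℝ)

/-- A rational polyhedron: a finite union of convex hulls of finitely many
rational points. -/
def IsRationalPolyhedron {k : ℕ} (P : Set (Fin k → ℝ)) : Prop :=
  ∃ (m : ℕ) (V : Fin m → Finset (Fin k → ℚ)),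
    P = ⋃ j : Fin m, convexHull ℝ ((fun q : Fin k → ℚ => fun i => (q i : ℝ)) '' ↑(V j))

/-- The n-fold ⊙-power: opow r n = r⊙⋯⊙r (n+... ) with opow r 0 = 1,
opow r (n+1) = (opow r n) ⊙ r, where x⊙y = max(0, x+y−1). -/
noncomputable def opow (r : ℝ) : ℕ → ℝ
  | 0 => 1
  | n + 1 => max 0 (opow r n + r - 1)


section Aux
namespace McN
variable {k : ℕ}

def lineval (a : Fin k → ℝ) (b : ℝ) (x : Fin k → ℝ) : ℝ := (∑ i, a i * x i) + b

lemma lineval_cont (a : Fin k → ℝ) (b : ℝ) : Continuous (lineval a b) := by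
  unfold lineval
  exact (continuous_finset_sum _ fun i _ => (continuous_const.mul (continuous_apply i))).add
    continuous_const

lemma lineval_sum {ι : Type*} (a : Fin k → ℝ) (b : ℝ) (t : Finset ι) (w : ι → ℝ)
    (z : ι → Fin k → ℝ) (hw : ∑ v ∈ t, w v = 1) :
    lineval a b (∑ v ∈ t, w v • z v) = ∑ v ∈ t, w v * lineval a b (z v) := by
  unfold lineval
  have h1 : ∀ i, (∑ v ∈ t, w v • z v) i = ∑ v ∈ t, w v * z v i := by
    intro i; rw [Finset.sum_apply]; rfl
  simp only [h1, mul_add, Finset.sum_add_distrib, Finset.mul_sum]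
  rw [← Finset.sum_mul, hw, one_mul]
  congr 1
  rw [Finset.sum_comm]
  congr 1; ext i; congr 1; ext v; ring

lemma lineval_combo (a : Fin k → ℝ) (b : ℝ) (α β : ℝ) (hαβ : α + β = 1) (u v : Fin k → ℝ) :
    lineval a b (α • u + β • v) = α * lineval a b u + β * lineval a b v := by
  have := lineval_sum a b ({0, 1} : Finset (Fin 2)) (fun i => if i = 0 then α else β)
    (fun i => if i = 0 then u else v) (by simp [hαβ])
  simpa using this

open Classical in
/-- crossing point of the segment [u,v] with the hyperplane lineval = 0 -/
noncomputable def cross (a : Fin k → ℝ) (b : ℝ) (u v : Fin k → ℝ) : Fin k → ℝ :=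
  (lineval a b v / (lineval a b v - lineval a b u)) • u +
    (-lineval a b u / (lineval a b v - lineval a b u)) • v

lemma cross_spec (a : Fin k → ℝ) (b : ℝ) {u v : Fin k → ℝ}
    (hu : lineval a b u < 0) (hv : 0 < lineval a b v) :
    lineval a b (cross a b u v) = 0 ∧
    (0:ℝ) ≤ lineval a b v / (lineval a b v - lineval a b u) ∧
    (0:ℝ) ≤ -lineval a b u / (lineval a b v - lineval a b u) ∧
    lineval a b v / (lineval a b v - lineval a b u) +
      -lineval a b u / (lineval a b v - lineval a b u) = 1 := by
  have hd : 0 < lineval a b v - lineval a b u := by linarith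
  have hs : lineval a b v / (lineval a b v - lineval a b u) +
      -lineval a b u / (lineval a b v - lineval a b u) = 1 := by
    field_simp; ring
  refine ⟨?_, by positivity, div_nonneg (by linarith) hd.le, hs⟩
  rw [cross, lineval_combo a b _ _ hs]
  field_simp
  ring

open Classical in
noncomputable def cutFinset (a : Fin k → ℝ) (b : ℝ) (s : Finset (Fin k → ℝ)) :
    Finset (Fin k → ℝ) :=
  s.filter (fun v => lineval a b v ≤ 0) ∪
    ((s ×ˢ s).filter (fun p => lineval a b p.1 < 0 ∧ 0 < lineval a b p.2)).image
      (fun p => cross a b p.1 p.2)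

open Classical in
lemma cutFinset_subset (a : Fin k → ℝ) (b : ℝ) (s : Finset (Fin k → ℝ)) :
    (↑(cutFinset a b s) : Set (Fin k → ℝ)) ⊆
      convexHull ℝ ↑s ∩ {x | lineval a b x ≤ 0} := by
  intro v hv
  simp only [cutFinset, Finset.coe_union, Set.mem_union, Finset.mem_coe,
    Finset.mem_filter, Finset.mem_image, Finset.mem_product] at hv
  rcases hv with ⟨hvs, hv0⟩ | ⟨⟨u1, u2⟩, hp, rfl⟩
  · exact ⟨subset_convexHull ℝ _ hvs, hv0⟩
  · simp only [Finset.mem_filter, Finset.mem_product] at hp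
    obtain ⟨⟨h1, h2⟩, hneg, hpos⟩ := hp
    obtain ⟨hz, hc1, hc2, hcs⟩ := cross_spec a b hneg hpos
    constructor
    · exact (convex_convexHull ℝ _) (subset_convexHull ℝ _ h1) (subset_convexHull ℝ _ h2)
        hc1 hc2 hcs
    · exact le_of_eq hz

end McN

namespace McN2
open McN
variable {k : ℕ}

attribute [local instance] Classical.propDecidable

lemma cut_done (a : Fin k → ℝ) (b : ℝ) (s : Finset (Fin k → ℝ))
    (t : Finset (Fin k → ℝ)) (w : (Fin k → ℝ) → ℝ) (x : Fin k → ℝ)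
    (ht : (↑t : Set (Fin k → ℝ)) ⊆ ↑s ∪ ↑(cutFinset a b s))
    (hw0 : ∀ v ∈ t, 0 ≤ w v) (hw1 : ∑ v ∈ t, w v = 1)
    (hx : ∑ v ∈ t, w v • v = x)
    (hdone : ∀ v ∈ t, 0 < w v → lineval a b v ≤ 0) :
    x ∈ convexHull ℝ (↑(cutFinset a b s) : Set (Fin k → ℝ)) := by
  set t' := t.filter (fun v => 0 < w v) with ht'
  have hsub : t' ⊆ t := Finset.filter_subset _ _
  have hzero : ∀ v ∈ t, v ∉ t' → w v = 0 := by
    intro v hv hv'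
    simp only [ht', Finset.mem_filter] at hv'
    have := hw0 v hv
    push_neg at hv'
    linarith [hv' hv]
  have hw1' : ∑ v ∈ t', w v = 1 := by
    rw [← hw1]
    exact Finset.sum_subset hsub (fun v hv hnv => hzero v hv hnv)
  have hx' : ∑ v ∈ t', w v • v = x := by
    rw [← hx]
    refine Finset.sum_subset hsub (fun v hv hnv => ?_)
    rw [hzero v hv hnv, zero_smul]
  have hmem : ∀ v ∈ t', v ∈ (↑(cutFinset a b s) : Set (Fin k → ℝ)) := by
    intro v hv
    have hvt : v ∈ t := hsub hv
    have hwv : 0 < w v := (Finset.mem_filter.mp hv).2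
    have hδ : lineval a b v ≤ 0 := hdone v hvt hwv
    rcases ht hvt with hvs | hvc
    · simp only [cutFinset, Finset.coe_union, Set.mem_union]
      left
      simp only [Finset.mem_coe, Finset.mem_filter]
      exact ⟨hvs, hδ⟩
    · exact hvc
  have := Finset.centerMass_mem_convexHull t'
    (fun v hv => hw0 v (hsub hv)) (by rw [hw1']; norm_num) (z := id) hmem
  rwa [Finset.centerMass_eq_of_sum_1 _ _ hw1', show ∑ v ∈ t', w v • id v = x from hx'] at this

end McN2

namespace McN2
open McN
variable {k : ℕ}

attribute [local instance] Classical.propDecidable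

lemma cut_aux (a : Fin k → ℝ) (b : ℝ) (s : Finset (Fin k → ℝ)) :
    ∀ (n : ℕ) (t : Finset (Fin k → ℝ)) (w : (Fin k → ℝ) → ℝ) (x : Fin k → ℝ),
    (↑t : Set (Fin k → ℝ)) ⊆ ↑s ∪ ↑(cutFinset a b s) →
    (∀ v ∈ t, 0 ≤ w v) → (∑ v ∈ t, w v = 1) → (∑ v ∈ t, w v • v = x) →
    lineval a b x ≤ 0 →
    (t.filter (fun v => 0 < w v ∧ lineval a b v ≠ 0)).card ≤ n →
    x ∈ convexHull ℝ (↑(cutFinset a b s) : Set (Fin k → ℝ)) := by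
  intro n
  induction n with
  | zero =>
    intro t w x ht hw0 hw1 hx hxle hcard
    refine cut_done a b s t w x ht hw0 hw1 hx ?_
    intro v hv hwv
    by_contra hδ
    push_neg at hδ
    have : v ∈ t.filter (fun v => 0 < w v ∧ lineval a b v ≠ 0) :=
      Finset.mem_filter.mpr ⟨hv, hwv, by intro h; rw [h] at hδ; linarith⟩
    have := Finset.card_pos.mpr ⟨v, this⟩
    omega
  | succ n ih =>
    intro t w x ht hw0 hw1 hx hxle hcard
    by_cases hpos : ∃ v ∈ t, 0 < w v ∧ 0 < lineval a b v
    swap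
    · refine cut_done a b s t w x ht hw0 hw1 hx ?_
      intro v hv hwv
      push_neg at hpos
      exact hpos v hv hwv
    obtain ⟨vp, hvpt, hwp, hδp⟩ := hpos
    -- find a strictly negative positively weighted point
    have hneg : ∃ v ∈ t, 0 < w v ∧ lineval a b v < 0 := by
      by_contra hneg
      push_neg at hneg
      have hterm : ∀ v ∈ t, 0 ≤ w v * lineval a b v := by
        intro v hv
        rcases lt_or_eq_of_le (hw0 v hv) with h | h
        · exact mul_nonneg (le_of_lt h) (hneg v hv h)
        · rw [← h, zero_mul]
      have hsumpos : 0 < ∑ v ∈ t, w v * lineval a b v :=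
        Finset.sum_pos' hterm ⟨vp, hvpt, mul_pos hwp hδp⟩
      rw [← lineval_sum a b t w _ hw1, show (∑ v ∈ t, w v • v) = x from hx] at hsumpos
      linarith
    obtain ⟨vm, hvmt, hwm, hδm⟩ := hneg
    obtain ⟨A, hA⟩ : ∃ A, lineval a b vp = A := ⟨_, rfl⟩
    obtain ⟨C, hC⟩ : ∃ C, -lineval a b vm = C := ⟨_, rfl⟩
    have hApos : 0 < A := hA ▸ hδp
    have hCpos : 0 < C := by rw [← hC]; linarith
    have hvpvm : vp ≠ vm := by
      intro h; rw [h] at hδp; linarith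
    -- vp, vm ∈ s
    have hmem_s : ∀ v ∈ t, lineval a b v ≠ 0 → v ∈ s := by
      intro v hv hδ
      rcases ht hv with h | h
      · exact h
      · simp only [cutFinset, Finset.coe_union, Set.mem_union, Finset.mem_coe,
          Finset.mem_filter, Finset.mem_image] at h
        rcases h with ⟨hs, _⟩ | ⟨⟨u1, u2⟩, hp, hcr⟩
        · exact hs
        · exfalso
          simp only [Finset.mem_filter, Finset.mem_product] at hp
          obtain ⟨_, h1, h2⟩ := hp
          exact hδ (by rw [← hcr]; exact (cross_spec a b h1 h2).1)
    have hvps : vp ∈ s := hmem_s vp hvpt (by linarith)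
    have hvms : vm ∈ s := hmem_s vm hvmt (by linarith)
    obtain ⟨wst, hwst⟩ : ∃ wst, cross a b vm vp = wst := ⟨_, rfl⟩
    have hcsp := cross_spec a b (show lineval a b vm < 0 from hδm) hδp
    have hδwst : lineval a b wst = 0 := hwst ▸ hcsp.1
    have hwstvp : wst ≠ vp := by intro h; rw [h] at hδwst; linarith
    have hwstvm : wst ≠ vm := by intro h; rw [h] at hδwst; linarith
    have hwstcut : wst ∈ cutFinset a b s := by
      simp only [cutFinset, Finset.mem_union, Finset.mem_image]
      right
      exact ⟨(vm, vp), Finset.mem_filter.mpr ⟨Finset.mem_product.mpr ⟨hvms, hvps⟩, hδm, hδp⟩, hwst⟩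
    obtain ⟨p, hpdef⟩ : ∃ p, w vp = p := ⟨_, rfl⟩
    obtain ⟨q, hqdef⟩ : ∃ q, w vm = q := ⟨_, rfl⟩
    have hp0 : 0 < p := hpdef ▸ hwp
    have hq0 : 0 < q := hqdef ▸ hwm
    obtain ⟨βp, hβp⟩ : ∃ b', min p (q * C / A) = b' := ⟨_, rfl⟩
    obtain ⟨βm, hβm⟩ : ∃ b', βp * A / C = b' := ⟨_, rfl⟩
    have hβp0 : 0 ≤ βp := by rw [← hβp]; exact le_min hp0.le (by positivity)
    have hβm0 : 0 ≤ βm := by rw [← hβm]; positivity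
    have hβpp : βp ≤ p := by rw [← hβp]; exact min_le_left _ _
    have hβpq : βp ≤ q * C / A := by rw [← hβp]; exact min_le_right _ _
    have hβmq : βm ≤ q := by
      rw [← hβm, div_le_iff₀ hCpos]
      calc βp * A ≤ (q * C / A) * A := by nlinarith
        _ = q * C := by field_simp
    -- the crossing point as a combination of vm and vp
    have hwst_comb : wst = (A / (A + C)) • vm + (C / (A + C)) • vp := by
      rw [← hwst, cross, hA]
      have h1 : lineval a b vm = -C := by linarith [hC]
      rw [h1]
      congr 2 <;> ring
    have hACpos : 0 < A + C := by linarith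
    have hkey : (βp + βm) • wst = βm • vm + βp • vp := by
      rw [hwst_comb, smul_add, smul_smul, smul_smul]
      congr 1
      · congr 1
        rw [← hβm]
        field_simp
        ring
      · congr 1
        rw [← hβm]
        field_simp
        ring
    -- new data
    obtain ⟨t', ht'⟩ : ∃ t', insert wst t = t' := ⟨_, rfl⟩
    obtain ⟨w', hw'⟩ : ∃ w', (fun v => (if v ∈ t then w v else 0)
        + (if v = wst then βp + βm else 0)
        - (if v = vp then βp else 0) - (if v = vm then βm else 0)) = w' := ⟨_, rfl⟩
    have hw'def : ∀ v, w' v = (if v ∈ t then w v else 0) + (if v = wst then βp + βm else 0)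
        - (if v = vp then βp else 0) - (if v = vm then βm else 0) := by
      intro v; rw [← hw']
    have htt' : t ⊆ t' := ht' ▸ Finset.subset_insert _ _
    have hwstt' : wst ∈ t' := ht' ▸ Finset.mem_insert_self _ _
    have hmemt' : ∀ v, v ∈ t' ↔ (v = wst ∨ v ∈ t) := by
      intro v; rw [← ht']; exact Finset.mem_insert
    have hw'vp : w' vp = p - βp := by
      rw [hw'def, if_pos hvpt, if_neg (Ne.symm hwstvp), if_pos rfl, if_neg hvpvm, hpdef]
      ring
    have hw'vm : w' vm = q - βm := by
      rw [hw'def, if_pos hvmt, if_neg (Ne.symm hwstvm), if_neg (Ne.symm hvpvm), if_pos rfl, hqdef]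
      ring
    have hw'wst : w' wst = (if wst ∈ t then w wst else 0) + (βp + βm) := by
      rw [hw'def, if_pos rfl, if_neg hwstvp, if_neg hwstvm]
      ring
    have hw'other : ∀ v, v ≠ wst → v ≠ vp → v ≠ vm → w' v = (if v ∈ t then w v else 0) := by
      intro v h1 h2 h3
      rw [hw'def, if_neg h1, if_neg h2, if_neg h3]
      ring
    have hw'0 : ∀ v ∈ t', 0 ≤ w' v := by
      intro v hv
      by_cases h1 : v = wst
      · subst h1
        rw [hw'wst]
        have h2 : 0 ≤ if v ∈ t then w v else 0 := by
          by_cases h : v ∈ t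
          · rw [if_pos h]; exact hw0 v h
          · rw [if_neg h]
        linarith
      by_cases h2 : v = vp
      · subst h2; rw [hw'vp]; linarith
      by_cases h3 : v = vm
      · subst h3; rw [hw'vm]; linarith
      rw [hw'other v h1 h2 h3]
      by_cases h : v ∈ t
      · rw [if_pos h]; exact hw0 v h
      · rw [if_neg h]
    -- sums
    have hsum_ind : ∑ v ∈ t', (if v ∈ t then w v else 0) = ∑ v ∈ t, w v := by
      rw [Finset.sum_ite_mem, Finset.inter_eq_right.mpr htt']
    have hsum_wst : ∑ v ∈ t', (if v = wst then βp + βm else 0) = βp + βm := by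
      rw [Finset.sum_ite_eq' t' wst (fun _ => βp + βm), if_pos hwstt']
    have hsum_vp : ∑ v ∈ t', (if v = vp then βp else 0) = βp := by
      rw [Finset.sum_ite_eq' t' vp (fun _ => βp), if_pos (htt' hvpt)]
    have hsum_vm : ∑ v ∈ t', (if v = vm then βm else 0) = βm := by
      rw [Finset.sum_ite_eq' t' vm (fun _ => βm), if_pos (htt' hvmt)]
    have hw'1 : ∑ v ∈ t', w' v = 1 := by
      simp only [hw'def]
      rw [Finset.sum_sub_distrib, Finset.sum_sub_distrib, Finset.sum_add_distrib,
        hsum_ind, hsum_wst, hsum_vp, hsum_vm, hw1]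
      ring
    have hite_smul : ∀ (c : Prop) [Decidable c] (r : ℝ) (v : Fin k → ℝ),
        (if c then r else 0) • v = (if c then r • v else 0) := by
      intro c inst r v
      by_cases h : c
      · rw [if_pos h, if_pos h]
      · rw [if_neg h, if_neg h, zero_smul]
    have hx'ind : ∑ v ∈ t', (if v ∈ t then w v else 0) • v = ∑ v ∈ t, w v • v := by
      rw [Finset.sum_congr rfl (fun v _ => hite_smul (v ∈ t) (w v) v),
        Finset.sum_ite_mem, Finset.inter_eq_right.mpr htt']
    have hx'wst : ∑ v ∈ t', (if v = wst then βp + βm else 0) • v = (βp + βm) • wst := by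
      rw [Finset.sum_congr rfl (fun v _ => hite_smul (v = wst) (βp + βm) v)]
      rw [show (∑ v ∈ t', if v = wst then (βp + βm) • v else 0)
          = ∑ v ∈ t', if v = wst then (βp + βm) • wst else 0 from
        Finset.sum_congr rfl (fun v _ => by
          by_cases h : v = wst
          · rw [if_pos h, if_pos h, h]
          · rw [if_neg h, if_neg h])]
      rw [Finset.sum_ite_eq' t' wst (fun _ => (βp + βm) • wst), if_pos hwstt']
    have hx'vp : ∑ v ∈ t', (if v = vp then βp else 0) • v = βp • vp := by
      rw [Finset.sum_congr rfl (fun v _ => hite_smul (v = vp) βp v)]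
      rw [show (∑ v ∈ t', if v = vp then βp • v else 0)
          = ∑ v ∈ t', if v = vp then βp • vp else 0 from
        Finset.sum_congr rfl (fun v _ => by
          by_cases h : v = vp
          · rw [if_pos h, if_pos h, h]
          · rw [if_neg h, if_neg h])]
      rw [Finset.sum_ite_eq' t' vp (fun _ => βp • vp), if_pos (htt' hvpt)]
    have hx'vm : ∑ v ∈ t', (if v = vm then βm else 0) • v = βm • vm := by
      rw [Finset.sum_congr rfl (fun v _ => hite_smul (v = vm) βm v)]
      rw [show (∑ v ∈ t', if v = vm then βm • v else 0)
          = ∑ v ∈ t', if v = vm then βm • vm else 0 from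
        Finset.sum_congr rfl (fun v _ => by
          by_cases h : v = vm
          · rw [if_pos h, if_pos h, h]
          · rw [if_neg h, if_neg h])]
      rw [Finset.sum_ite_eq' t' vm (fun _ => βm • vm), if_pos (htt' hvmt)]
    have hx' : ∑ v ∈ t', w' v • v = x := by
      have : ∀ v, w' v • v = (if v ∈ t then w v else 0) • v
          + (if v = wst then βp + βm else 0) • v
          - (if v = vp then βp else 0) • v - (if v = vm then βm else 0) • v := by
        intro v
        rw [hw'def, sub_smul, sub_smul, add_smul]
      rw [Finset.sum_congr rfl (fun v _ => this v), Finset.sum_sub_distrib,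
        Finset.sum_sub_distrib, Finset.sum_add_distrib, hx'ind, hx'wst, hx'vp, hx'vm,
        hx, hkey]
      abel
    -- subset condition
    have ht'sub : (↑t' : Set (Fin k → ℝ)) ⊆ ↑s ∪ ↑(cutFinset a b s) := by
      intro v hv
      rcases (hmemt' v).mp hv with h | h
      · right; rw [h]; exact hwstcut
      · exact ht h
    -- cardinality decrease
    have hfin : ∀ (z : Fin k → ℝ), z ∈ t → w' z = 0 → 0 < w z → lineval a b z ≠ 0 →
        (t'.filter (fun v => 0 < w' v ∧ lineval a b v ≠ 0)).card ≤ n := by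
      intro z hzt hw'z hwz hδz
      have hzfilter : z ∈ t.filter (fun v => 0 < w v ∧ lineval a b v ≠ 0) :=
        Finset.mem_filter.mpr ⟨hzt, hwz, hδz⟩
      have hsub2 : t'.filter (fun v => 0 < w' v ∧ lineval a b v ≠ 0) ⊆
          (t.filter (fun v => 0 < w v ∧ lineval a b v ≠ 0)).erase z := by
        intro v hv
        have hv2 := Finset.mem_filter.mp hv
        obtain ⟨hvt', hw'v, hδv⟩ : v ∈ t' ∧ 0 < w' v ∧ lineval a b v ≠ 0 :=
          ⟨hv2.1, hv2.2.1, hv2.2.2⟩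
        have h1 : v ≠ wst := by intro h; rw [h, hδwst] at hδv; exact hδv rfl
        have hvt : v ∈ t := by
          rcases (hmemt' v).mp hvt' with h | h
          · exact absurd h h1
          · exact h
        have hvz : v ≠ z := by
          intro h; rw [h, hw'z] at hw'v; exact lt_irrefl 0 hw'v
        refine Finset.mem_erase.mpr ⟨hvz, Finset.mem_filter.mpr ⟨hvt, ?_, hδv⟩⟩
        -- 0 < w v, since w' v ≤ w v for v ∈ t, v ≠ wst
        have hle : w' v ≤ w v := by
          rw [hw'def, if_pos hvt, if_neg h1]
          have i1 : 0 ≤ if v = vp then βp else 0 := by split <;> [exact hβp0; rfl]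
          have i2 : 0 ≤ if v = vm then βm else 0 := by split <;> [exact hβm0; rfl]
          linarith
        linarith
      calc (t'.filter (fun v => 0 < w' v ∧ lineval a b v ≠ 0)).card
          ≤ ((t.filter (fun v => 0 < w v ∧ lineval a b v ≠ 0)).erase z).card :=
            Finset.card_le_card hsub2
        _ = (t.filter (fun v => 0 < w v ∧ lineval a b v ≠ 0)).card - 1 :=
            Finset.card_erase_of_mem hzfilter
        _ ≤ n := by omega
    have hcard' : (t'.filter (fun v => 0 < w' v ∧ lineval a b v ≠ 0)).card ≤ n := by
      rcases min_cases p (q * C / A) with ⟨hm, _⟩ | ⟨hm, _⟩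
      · -- βp = p : vp is zeroed
        have hzero : w' vp = 0 := by rw [hw'vp, ← hβp, hm]; ring
        exact hfin vp hvpt hzero hwp (by linarith)
      · -- βp = q*C/A : βm = q, vm is zeroed
        have hβmq' : βm = q := by
          rw [← hβm, ← hβp, hm]
          field_simp
        have hzero : w' vm = 0 := by rw [hw'vm, hβmq']; ring
        exact hfin vm hvmt hzero hwm (by linarith)
    exact ih t' w' x ht'sub hw'0 hw'1 hx' hxle hcard'


lemma convex_halfspace_lineval (a : Fin k → ℝ) (b : ℝ) :
    Convex ℝ {x : Fin k → ℝ | lineval a b x ≤ 0} := by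
  have h : {x : Fin k → ℝ | lineval a b x ≤ 0} = {x | (∑ i, a i * x i) ≤ -b} := by
    ext x; simp only [Set.mem_setOf_eq, lineval]; constructor <;> intro h <;> linarith
  rw [h]
  refine convex_halfSpace_le ⟨?_, ?_⟩ _
  · intro u v
    rw [← Finset.sum_add_distrib]
    congr 1; funext i; simp only [Pi.add_apply]; ring
  · intro c u
    rw [Finset.smul_sum]
    congr 1; funext i; simp only [Pi.smul_apply, smul_eq_mul]; ring

lemma cut_eq (a : Fin k → ℝ) (b : ℝ) (s : Finset (Fin k → ℝ)) :
    convexHull ℝ (↑(cutFinset a b s) : Set (Fin k → ℝ)) =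
      convexHull ℝ ↑s ∩ {x | lineval a b x ≤ 0} := by
  apply le_antisymm
  · refine convexHull_min (cutFinset_subset a b s) ?_
    exact (convex_convexHull ℝ _).inter (convex_halfspace_lineval a b)
  · rintro x ⟨hxh, hxle⟩
    rw [Finset.convexHull_eq] at hxh
    obtain ⟨w, hw0, hw1, hwx⟩ := hxh
    refine cut_aux a b s (s.filter (fun v => 0 < w v ∧ lineval a b v ≠ 0)).card s w x
      ?_ hw0 hw1 ?_ hxle le_rfl
    · intro v hv; left; exact hv
    · rw [Finset.centerMass_eq_of_sum_1 _ _ hw1] at hwx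
      exact hwx

lemma polyCut (l : List ((Fin k → ℝ) × ℝ)) (s : Finset (Fin k → ℝ)) :
    ∃ T : Finset (Fin k → ℝ),
      convexHull ℝ (↑T : Set (Fin k → ℝ)) =
        convexHull ℝ ↑s ∩ {x | ∀ p ∈ l, lineval p.1 p.2 x ≤ 0} := by
  induction l generalizing s with
  | nil =>
    exact ⟨s, by simp⟩
  | cons p l ih =>
    obtain ⟨T, hT⟩ := ih (cutFinset p.1 p.2 s)
    refine ⟨T, ?_⟩
    rw [hT, cut_eq]
    ext x
    simp only [Set.mem_inter_iff, Set.mem_setOf_eq, List.mem_cons]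
    constructor
    · rintro ⟨⟨h1, h2⟩, h3⟩
      exact ⟨h1, fun q hq => by rcases hq with rfl | hq; exacts [h2, h3 q hq]⟩
    · rintro ⟨h1, h2⟩
      exact ⟨⟨h1, h2 p (Or.inl rfl)⟩, fun q hq => h2 q (Or.inr hq)⟩

end McN2

namespace McN2
open McN
variable {k : ℕ}
attribute [local instance] Classical.propDecidable

lemma avg_neg {ι : Type} (t : Finset ι) (c : ι → ℝ) (w : ℝ) (hw : 0 < w)
    (h0 : ∀ i ∈ t, c i ≤ 0) (hx : ∃ i ∈ t, c i < 0) :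
    ∑ i ∈ t, w * c i < 0 := by
  have := Finset.sum_lt_sum (g := fun _ => (0:ℝ))
    (fun i hi => mul_nonpos_of_nonneg_of_nonpos hw.le (h0 i hi))
    (by obtain ⟨i, hi, hci⟩ := hx; exact ⟨i, hi, mul_neg_of_pos_of_neg hw hci⟩)
  simpa using this

set_option maxHeartbeats 1000000 in
/-- A continuous pointwise selection from a finite family of affine functions,
on a convex set where each pair of pieces is uniformly ordered, is a single piece. -/
lemma select {m : ℕ} (A : Fin m → Fin k → ℝ) (B : Fin m → ℝ)
    (E : Set (Fin k → ℝ)) (hEconv : Convex ℝ E) (hEne : E.Nonempty)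
    (f : (Fin k → ℝ) → ℝ) (hf : ContinuousOn f E)
    (hsel : ∀ x ∈ E, ∃ j, f x = lineval (A j) (B j) x)
    (horder : ∀ p q : Fin m, (∀ x ∈ E, lineval (A p) (B p) x ≤ lineval (A q) (B q) x) ∨
      (∀ x ∈ E, lineval (A q) (B q) x ≤ lineval (A p) (B p) x)) :
    ∃ j, ∀ x ∈ E, f x = lineval (A j) (B j) x := by
  set L : Fin m → (Fin k → ℝ) → ℝ := fun j => lineval (A j) (B j) with hL
  set PB : Finset (Fin m × Fin m) :=
    Finset.univ.filter (fun pq => ¬ Set.EqOn (L pq.1) (L pq.2) E) with hPB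
  have hPBmem : ∀ pq : Fin m × Fin m, pq ∈ PB ↔ ¬ Set.EqOn (L pq.1) (L pq.2) E := by
    intro pq; simp [hPB]
  by_cases hPBe : PB = ∅
  · -- all pieces agree on E
    obtain ⟨x0, hx0⟩ := hEne
    obtain ⟨j0, hj0⟩ := hsel x0 hx0
    refine ⟨j0, fun x hx => ?_⟩
    obtain ⟨j, hj⟩ := hsel x hx
    have : ¬ (j, j0) ∈ PB := by rw [hPBe]; exact Finset.notMem_empty _
    rw [hPBmem] at this
    push_neg at this
    rw [hj]
    exact this hx
  · -- choose witnesses for each bad pair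
    have hwit : ∀ pq : Fin m × Fin m, pq ∈ PB → ∃ y, y ∈ E ∧ L pq.1 y ≠ L pq.2 y := by
      intro pq hpq
      rw [hPBmem] at hpq
      rw [Set.EqOn] at hpq
      push_neg at hpq
      obtain ⟨y, hy, hne⟩ := hpq
      exact ⟨y, hy, hne⟩
    choose z hzE hzne using hwit
    have hN : 0 < (PB.card : ℝ) := by
      have : PB.Nonempty := Finset.nonempty_of_ne_empty hPBe
      exact_mod_cast Finset.card_pos.mpr this
    set N : ℝ := (PB.card : ℝ) with hNdef
    have hsumw : ∑ pq ∈ PB.attach, (1 / N) = 1 := by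
      rw [Finset.sum_const, Finset.card_attach, nsmul_eq_mul]
      field_simp
      exact hNdef.symm
    obtain ⟨ybar, hybar⟩ : ∃ y : Fin k → ℝ, ∑ pq ∈ PB.attach, (1 / N) • z pq.1 pq.2 = y :=
      ⟨_, rfl⟩
    have hybarE : ybar ∈ E := by
      have := Finset.centerMass_mem_convexHull PB.attach
        (w := fun _ => 1 / N) (fun _ _ => by positivity) (by rw [hsumw]; norm_num)
        (z := fun pq => z pq.1 pq.2) (s := E) (fun pq _ => hzE pq.1 pq.2)
      rw [Finset.centerMass_eq_of_sum_1 _ _ hsumw, hEconv.convexHull_eq, hybar] at this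
      exact this
    -- the key sign dichotomy for each bad pair
    have hkey : ∀ pq : Fin m × Fin m, pq ∈ PB →
        ((∀ x ∈ E, L pq.1 x ≤ L pq.2 x) ∧ L pq.1 ybar < L pq.2 ybar) ∨
        ((∀ x ∈ E, L pq.2 x ≤ L pq.1 x) ∧ L pq.2 ybar < L pq.1 ybar) := by
      intro pq hpq
      have h1N : 0 < 1 / N := by positivity
      have h1 : ∀ j, L j ybar = ∑ r ∈ PB.attach, (1 / N) * L j (z r.1 r.2) := by
        intro j
        rw [← hybar]
        exact lineval_sum _ _ _ _ _ hsumw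
      have h12 : L pq.1 ybar - L pq.2 ybar
          = ∑ r ∈ PB.attach, (1 / N) * (L pq.1 (z r.1 r.2) - L pq.2 (z r.1 r.2)) := by
        rw [h1 pq.1, h1 pq.2, ← Finset.sum_sub_distrib]
        congr 1
        funext r
        ring
      have hne := hzne pq hpq
      rcases horder pq.1 pq.2 with hord | hord
      · left
        refine ⟨hord, ?_⟩
        have hneg : L pq.1 ybar - L pq.2 ybar < 0 := by
          rw [h12]
          refine avg_neg _ _ _ h1N (fun r _ => by linarith [hord _ (hzE r.1 r.2)]) ?_
          refine ⟨⟨pq, hpq⟩, Finset.mem_attach _ _, ?_⟩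
          have := hord _ (hzE pq hpq)
          rcases lt_or_eq_of_le this with h | h
          · linarith
          · exact absurd h hne
        linarith
      · right
        refine ⟨hord, ?_⟩
        have hneg : L pq.2 ybar - L pq.1 ybar < 0 := by
          have h21 : L pq.2 ybar - L pq.1 ybar
              = ∑ r ∈ PB.attach, (1 / N) * (L pq.2 (z r.1 r.2) - L pq.1 (z r.1 r.2)) := by
            rw [h1 pq.1, h1 pq.2, ← Finset.sum_sub_distrib]
            congr 1
            funext r
            ring
          rw [h21]
          refine avg_neg _ _ _ h1N (fun r _ => by linarith [hord _ (hzE r.1 r.2)]) ?_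
          refine ⟨⟨pq, hpq⟩, Finset.mem_attach _ _, ?_⟩
          have := hord _ (hzE pq hpq)
          rcases lt_or_eq_of_le this with h | h
          · linarith
          · exact absurd h.symm hne
        linarith
    -- the dense convex subset where all bad pairs are strictly separated
    set U : Set (Fin k → ℝ) := {x ∈ E | ∀ pq ∈ PB, L pq.1 x ≠ L pq.2 x} with hU
    have hUsubE : U ⊆ E := fun x hx => hx.1
    -- path into U
    have hpath : ∀ x ∈ E, ∀ t : ℝ, 0 < t → t ≤ 1 → (1 - t) • x + t • ybar ∈ U := by
      intro x hx t ht0 ht1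
      have hmemE : (1 - t) • x + t • ybar ∈ E := hEconv hx hybarE (by linarith) ht0.le (by ring)
      refine ⟨hmemE, fun pq hpq => ?_⟩
      have hcombo : ∀ j, L j ((1 - t) • x + t • ybar)
          = (1 - t) * L j x + t * L j ybar := fun j =>
        lineval_combo (A j) (B j) (1 - t) t (by ring) x ybar
      rcases hkey pq hpq with ⟨hord, hstr⟩ | ⟨hord, hstr⟩
      · have := hord x hx
        rw [hcombo pq.1, hcombo pq.2]
        intro hcontra
        nlinarith
      · have := hord x hx
        rw [hcombo pq.1, hcombo pq.2]
        intro hcontra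
        nlinarith
    have hybarU : ybar ∈ U := by
      refine ⟨hybarE, fun pq hpq => ?_⟩
      rcases hkey pq hpq with ⟨_, hstr⟩ | ⟨_, hstr⟩
      · exact ne_of_lt hstr
      · exact (ne_of_lt hstr).symm
    -- U is convex
    have hUconv : Convex ℝ U := by
      intro x hx y hy α β hα hβ hαβ
      refine ⟨hEconv hx.1 hy.1 hα hβ hαβ, fun pq hpq => ?_⟩
      have hcombo : ∀ j, L j (α • x + β • y) = α * L j x + β * L j y := fun j =>
        lineval_combo (A j) (B j) α β hαβ x y
      rw [hcombo pq.1, hcombo pq.2]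
      rcases hkey pq hpq with ⟨hord, _⟩ | ⟨hord, _⟩
      · have h1 : L pq.1 x < L pq.2 x := lt_of_le_of_ne (hord x hx.1) (hx.2 pq hpq)
        have h2 : L pq.1 y < L pq.2 y := lt_of_le_of_ne (hord y hy.1) (hy.2 pq hpq)
        intro hcontra
        rcases eq_or_lt_of_le hα with h | h
        · rw [← h] at hαβ hcontra
          simp at hαβ
          nlinarith
        · nlinarith
      · have h1 : L pq.2 x < L pq.1 x := lt_of_le_of_ne (hord x hx.1) (Ne.symm (hx.2 pq hpq))
        have h2 : L pq.2 y < L pq.1 y := lt_of_le_of_ne (hord y hy.1) (Ne.symm (hy.2 pq hpq))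
        intro hcontra
        rcases eq_or_lt_of_le hα with h | h
        · rw [← h] at hαβ hcontra
          simp at hαβ
          nlinarith
        · nlinarith
    -- the piece selected at ybar
    obtain ⟨j0, hj0⟩ := hsel ybar hybarE
    -- clopen argument on the subtype of U
    have hfU : Continuous (U.restrict f) :=
      ContinuousOn.restrict (hf.mono hUsubE)
    have hLU : ∀ j, Continuous (fun y : ↥U => L j ↑y) := fun j =>
      (lineval_cont (A j) (B j)).comp continuous_subtype_val
    haveI : PreconnectedSpace ↥U := Subtype.preconnectedSpace hUconv.isPreconnected
    set AA : Set ↥U := {y : ↥U | f ↑y = L j0 ↑y} with hAA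
    have hclosed : IsClosed AA := isClosed_eq hfU (hLU j0)
    have hopen : IsOpen AA := by
      rw [isOpen_iff_mem_nhds]
      intro y0 hy0
      set V : Set ↥U := {y : ↥U | ∀ q : Fin m, L q ↑y0 ≠ f ↑y0 → f ↑y ≠ L q ↑y} with hV
      have hVopen : IsOpen V := by
        have : V = ⋂ q : Fin m, {y : ↥U | L q ↑y0 ≠ f ↑y0 → f ↑y ≠ L q ↑y} := by
          ext y; simp [hV]
        rw [this]
        refine isOpen_iInter_of_finite (fun q => ?_)
        by_cases hq : L q ↑y0 ≠ f ↑y0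
        · have : {y : ↥U | L q ↑y0 ≠ f ↑y0 → f ↑y ≠ L q ↑y}
              = {y : ↥U | f ↑y = L q ↑y}ᶜ := by
            ext y
            simp only [Set.mem_setOf_eq, Set.mem_compl_iff]
            exact ⟨fun h => h hq, fun h _ => h⟩
          rw [this]
          exact (isClosed_eq hfU (hLU q)).isOpen_compl
        · have : {y : ↥U | L q ↑y0 ≠ f ↑y0 → f ↑y ≠ L q ↑y} = Set.univ := by
            ext y
            simp only [Set.mem_setOf_eq, Set.mem_univ, iff_true]
            intro h; exact absurd h hq
          rw [this]
          exact isOpen_univ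
      have hy0V : y0 ∈ V := by
        intro q hq
        rw [hAA, Set.mem_setOf_eq] at hy0
        intro h
        exact hq (by rw [← h, hy0])
      have hVAA : V ⊆ AA := by
        intro y hy
        obtain ⟨q, hq⟩ := hsel ↑y (hUsubE y.2)
        have hq0 : L q ↑y0 = f ↑y0 := by
          by_contra hne
          exact (hy q hne) hq
        rw [hAA, Set.mem_setOf_eq] at hy0 ⊢
        have hqj0 : (q, j0) ∉ PB := by
          intro hmem
          have := (y0 : ↥U).2.2 (q, j0) hmem
          exact this (by rw [hq0, hy0])
        rw [hPBmem] at hqj0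
        push_neg at hqj0
        rw [hq]
        exact hqj0 (hUsubE y.2)
      exact Filter.mem_of_superset (hVopen.mem_nhds hy0V) hVAA
    have hAAne : AA.Nonempty := ⟨⟨ybar, hybarU⟩, hj0⟩
    have hAAuniv : AA = Set.univ := IsClopen.eq_univ ⟨hclosed, hopen⟩ hAAne
    have hfLU : ∀ y ∈ U, f y = L j0 y := by
      intro y hy
      have : (⟨y, hy⟩ : ↥U) ∈ AA := by rw [hAAuniv]; trivial
      exact this
    -- extend to all of E by taking limits along the segment toward ybar
    refine ⟨j0, fun x hx => ?_⟩
    set seq : ℕ → (Fin k → ℝ) := fun n : ℕ => (1 - 1/((n:ℝ)+1)) • x + (1/((n:ℝ)+1)) • ybar with hseq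
    have hseqU : ∀ n, seq n ∈ U := by
      intro n
      have := hpath x hx (1/(n+1)) (by positivity)
        (by rw [div_le_one (by positivity)]; linarith [Nat.cast_nonneg (α := ℝ) n])
      simpa [hseq] using this
    have hlim : Filter.Tendsto seq Filter.atTop (nhds x) := by
      have h1 : Filter.Tendsto (fun n : ℕ => (1/(n+1) : ℝ)) Filter.atTop (nhds 0) :=
        tendsto_one_div_add_atTop_nhds_zero_nat
      have h2 : Filter.Tendsto (fun n : ℕ => (1 - 1/(n+1) : ℝ)) Filter.atTop (nhds 1) := by
        have := h1.const_sub 1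
        simpa using this
      have h3 := (h2.smul_const x).add (h1.smul_const ybar)
      rw [hseq]
      simpa using h3
    have hfx : Filter.Tendsto (fun n => f (seq n)) Filter.atTop (nhds (f x)) := by
      refine (hf x hx).tendsto.comp ?_
      rw [tendsto_nhdsWithin_iff]
      exact ⟨hlim, Filter.Eventually.of_forall (fun n => hUsubE (hseqU n))⟩
    have hLx : Filter.Tendsto (fun n => L j0 (seq n)) Filter.atTop (nhds (L j0 x)) :=
      ((lineval_cont (A j0) (B j0)).tendsto x).comp hlim
    have heq : (fun n => f (seq n)) = (fun n => L j0 (seq n)) := by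
      funext n
      exact hfLU (seq n) (hseqU n)
    rw [heq] at hfx
    exact tendsto_nhds_unique hfx hLx

end McN2

namespace McN2
open McN
variable {k : ℕ}
attribute [local instance] Classical.propDecidable

lemma lineval_sub (a a' : Fin k → ℝ) (b b' : ℝ) (x : Fin k → ℝ) :
    lineval (fun t => a t - a' t) (b - b') x = lineval a b x - lineval a' b' x := by
  unfold lineval
  rw [show (∑ i, (a i - a' i) * x i) = ∑ i, (a i * x i - a' i * x i) from by
    congr 1; funext i; ring, Finset.sum_sub_distrib]
  ring

lemma lineval_neg (a : Fin k → ℝ) (b : ℝ) (x : Fin k → ℝ) :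
    lineval (fun t => -a t) (-b) x = -lineval a b x := by
  unfold lineval
  rw [show (∑ i, (-a i) * x i) = ∑ i, -(a i * x i) from by congr 1; funext i; ring,
    Finset.sum_neg_distrib]
  ring

/-- the ratio bound on a polytope given by its "vertices" -/
lemma vertexBound (T : Finset (Fin k → ℝ)) (Af : Fin k → ℝ) (Bf : ℝ) (Ag : Fin k → ℝ) (Bg : ℝ)
    (hgle : ∀ x ∈ convexHull ℝ (↑T : Set (Fin k → ℝ)), lineval Ag Bg x ≤ 1)
    (honeE : ∀ x ∈ convexHull ℝ (↑T : Set (Fin k → ℝ)),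
      lineval Ag Bg x = 1 → lineval Af Bf x = 1) :
    ∃ c : ℝ, 0 ≤ c ∧ ∀ x ∈ convexHull ℝ (↑T : Set (Fin k → ℝ)),
      1 - lineval Af Bf x ≤ c * (1 - lineval Ag Bg x) := by
  obtain ⟨c0, hc0⟩ : ∃ c0 : ℝ, ∀ v ∈ T,
      (1 - lineval Af Bf v) / (1 - lineval Ag Bg v) ≤ c0 := by
    have hfin : (Set.range (fun v : T => (1 - lineval Af Bf v) / (1 - lineval Ag Bg v))).Finite :=
      Set.finite_range _
    obtain ⟨c0, hc0⟩ := hfin.bddAbove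
    exact ⟨c0, fun v hv => hc0 ⟨⟨v, hv⟩, rfl⟩⟩
  refine ⟨max c0 0, le_max_right _ _, ?_⟩
  have hvert : ∀ v ∈ T, 1 - lineval Af Bf v ≤ max c0 0 * (1 - lineval Ag Bg v) := by
    intro v hv
    have hvE : v ∈ convexHull ℝ (↑T : Set (Fin k → ℝ)) := subset_convexHull ℝ _ hv
    rcases eq_or_lt_of_le (hgle v hvE) with h | h
    · rw [honeE v hvE h, h]
      simp
    · have hpos : 0 < 1 - lineval Ag Bg v := by linarith
      have := hc0 v hv
      rw [div_le_iff₀ hpos] at this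
      calc 1 - lineval Af Bf v ≤ c0 * (1 - lineval Ag Bg v) := this
        _ ≤ max c0 0 * (1 - lineval Ag Bg v) :=
          mul_le_mul_of_nonneg_right (le_max_left _ _) hpos.le
  intro x hx
  rw [Finset.convexHull_eq] at hx
  obtain ⟨w, hw0, hw1, hwx⟩ := hx
  rw [Finset.centerMass_eq_of_sum_1 _ _ hw1] at hwx
  have hfx : lineval Af Bf x = ∑ v ∈ T, w v * lineval Af Bf v := by
    rw [← hwx]; exact lineval_sum _ _ _ _ _ hw1
  have hgx : lineval Ag Bg x = ∑ v ∈ T, w v * lineval Ag Bg v := by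
    rw [← hwx]; exact lineval_sum _ _ _ _ _ hw1
  have h1 : (1:ℝ) = ∑ v ∈ T, w v := hw1.symm
  calc 1 - lineval Af Bf x = ∑ v ∈ T, w v * (1 - lineval Af Bf v) := by
        rw [hfx]
        nth_rewrite 1 [h1]
        rw [← Finset.sum_sub_distrib]
        congr 1; funext v; ring
    _ ≤ ∑ v ∈ T, w v * (max c0 0 * (1 - lineval Ag Bg v)) := by
        refine Finset.sum_le_sum (fun v hv => ?_)
        exact mul_le_mul_of_nonneg_left (hvert v hv) (hw0 v hv)
    _ = max c0 0 * (1 - lineval Ag Bg x) := by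
        rw [hgx]
        nth_rewrite 2 [h1]
        rw [← Finset.sum_sub_distrib, Finset.mul_sum]
        congr 1; funext v; ring

lemma opow_le (r : ℝ) (hr1 : r ≤ 1) : ∀ n : ℕ, opow r n ≤ max 0 (1 - n * (1 - r)) := by
  intro n
  induction n with
  | zero => simp [opow]
  | succ n ih =>
    show max 0 (opow r n + r - 1) ≤ _
    rcases le_or_gt (opow r n + r - 1) 0 with h | h
    · rw [max_eq_left h]
      exact le_max_left _ _
    · rw [max_eq_right h.le]
      rcases le_or_gt (1 - n * (1 - r)) 0 with h2 | h2
      · have : opow r n ≤ 0 := le_trans ih (by rw [max_eq_left h2])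
        have : opow r n + r - 1 ≤ 0 := by linarith
        linarith [le_max_left (0:ℝ) (1 - (n+1 : ℕ) * (1 - r))]
      · have hle : opow r n ≤ 1 - n * (1 - r) := le_trans ih (by rw [max_eq_right h2.le])
        have : opow r n + r - 1 ≤ 1 - (n+1 : ℕ) * (1 - r) := by
          push_cast
          linarith
        exact le_trans this (le_max_right _ _)

end McN2

end Aux

open McN McN2 in
set_option maxHeartbeats 1000000 in
/-- If the onesets restricted to a rational polyhedron P satisfy
O(g) ∩ P ⊆ O(f) ∩ P, then some n-fold ⊙-power of g|_P is pointwise ≤ f|_P. -/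
theorem oneset_subset_imp_power_le {k : ℕ} (f g : (Fin k → ℝ) → ℝ)
    (P : Set (Fin k → ℝ))
    (hf : IsMcNaughton f) (hg : IsMcNaughton g)
    (hP : IsRationalPolyhedron P) (hPc : P ⊆ unitCube k)
    (hone : ∀ x ∈ P, g x = 1 → f x = 1) :
    ∃ n : ℕ, 0 < n ∧ ∀ x ∈ P, opow (g x) n ≤ f x := by
  obtain ⟨mP, V, hPeq⟩ := hP
  obtain ⟨hfc, hfr, mf, af, bf, hfp⟩ := hf
  obtain ⟨hgc, hgr, mg, ag, bg, hgp⟩ := hg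
  set Af : Fin mf → Fin k → ℝ := fun j i => (af j i : ℝ) with hAf
  set Bf : Fin mf → ℝ := fun j => (bf j : ℝ) with hBf
  set Ag : Fin mg → Fin k → ℝ := fun j i => (ag j i : ℝ) with hAg
  set Bg : Fin mg → ℝ := fun j => (bg j : ℝ) with hBg
  -- the sign-pattern index type
  set σ := ((Fin mf × Fin mf) ⊕ (Fin mg × Fin mg)) with hσ
  set Dc : σ → ((Fin k → ℝ) × ℝ) := fun i =>
    Sum.elim (fun pq : Fin mf × Fin mf =>
        ((fun t => Af pq.1 t - Af pq.2 t), Bf pq.1 - Bf pq.2))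
      (fun pq : Fin mg × Fin mg =>
        ((fun t => Ag pq.1 t - Ag pq.2 t), Bg pq.1 - Bg pq.2)) i with hDc
  set Dor : (σ → Bool) → σ → ((Fin k → ℝ) × ℝ) := fun s i =>
    if s i then Dc i else ((fun t => -(Dc i).1 t), -(Dc i).2) with hDor
  set K : (σ → Bool) → Set (Fin k → ℝ) := fun s =>
    {x | ∀ i : σ, lineval (Dor s i).1 (Dor s i).2 x ≤ 0} with hK
  -- evaluation of the difference functionals
  have hDcf : ∀ (p q : Fin mf) (x : Fin k → ℝ),
      lineval (Dc (Sum.inl (p, q))).1 (Dc (Sum.inl (p, q))).2 x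
        = lineval (Af p) (Bf p) x - lineval (Af q) (Bf q) x := by
    intro p q x
    exact lineval_sub (Af p) (Af q) (Bf p) (Bf q) x
  have hDcg : ∀ (p q : Fin mg) (x : Fin k → ℝ),
      lineval (Dc (Sum.inr (p, q))).1 (Dc (Sum.inr (p, q))).2 x
        = lineval (Ag p) (Bg p) x - lineval (Ag q) (Bg q) x := by
    intro p q x
    exact lineval_sub (Ag p) (Ag q) (Bg p) (Bg q) x
  have hDneg : ∀ (i : σ) (x : Fin k → ℝ),
      lineval ((fun t => -(Dc i).1 t)) (-(Dc i).2) x = - lineval (Dc i).1 (Dc i).2 x := by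
    intro i x
    exact lineval_neg (Dc i).1 (Dc i).2 x
  -- the vertex sets of the pieces of P
  have hVfin : ∀ j : Fin mP,
      ((fun q : Fin k → ℚ => fun i => (q i : ℝ)) '' ↑(V j)).Finite :=
    fun j => (Finset.finite_toSet (V j)).image _
  -- per-cell constants
  have hcells : ∀ js : Fin mP × (σ → Bool), ∃ c : ℝ, 0 ≤ c ∧
      ∀ x ∈ convexHull ℝ ((fun q : Fin k → ℚ => fun i => (q i : ℝ)) '' ↑(V js.1)) ∩ K js.2,
        1 - f x ≤ c * (1 - g x) := by
    rintro ⟨j0, s⟩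
    set Vset : Finset (Fin k → ℝ) := (hVfin j0).toFinset with hVset
    have hVcoe : (↑Vset : Set (Fin k → ℝ))
        = (fun q : Fin k → ℚ => fun i => (q i : ℝ)) '' ↑(V j0) := (hVfin j0).coe_toFinset
    set l : List ((Fin k → ℝ) × ℝ) := (Finset.univ : Finset σ).toList.map (Dor s) with hl
    obtain ⟨T, hT⟩ := polyCut l Vset
    have hKl : {x : Fin k → ℝ | ∀ p ∈ l, lineval p.1 p.2 x ≤ 0} = K s := by
      ext x
      simp only [Set.mem_setOf_eq, hK, hl, List.mem_map, Finset.mem_toList, Finset.mem_univ,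
        true_and]
      constructor
      · intro h i
        exact h (Dor s i) ⟨i, rfl⟩
      · rintro h p ⟨i, rfl⟩
        exact h i
    have hE : convexHull ℝ (↑T : Set (Fin k → ℝ))
        = convexHull ℝ ((fun q : Fin k → ℚ => fun i => (q i : ℝ)) '' ↑(V j0)) ∩ K s := by
      rw [hT, hVcoe, hKl]
    -- E is inside P and the cube
    have hEP : convexHull ℝ (↑T : Set (Fin k → ℝ)) ⊆ P := by
      rw [hE, hPeq]
      exact (Set.inter_subset_left).trans
        (Set.subset_iUnion
          (fun j => convexHull ℝ ((fun q : Fin k → ℚ => fun i => (q i : ℝ)) '' ↑(V j))) j0)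
    have hEcube : convexHull ℝ (↑T : Set (Fin k → ℝ)) ⊆ unitCube k := hEP.trans hPc
    by_cases hEne : (convexHull ℝ (↑T : Set (Fin k → ℝ))).Nonempty
    swap
    · refine ⟨0, le_refl 0, fun x hx => ?_⟩
      exfalso
      exact hEne ⟨x, by rw [hE]; exact hx⟩
    -- select the pieces of f and g on E
    have hKmem : ∀ x ∈ convexHull ℝ (↑T : Set (Fin k → ℝ)), x ∈ K s := by
      intro x hx
      rw [hE] at hx
      exact hx.2
    obtain ⟨jf, hjf⟩ := select Af Bf (convexHull ℝ (↑T : Set (Fin k → ℝ)))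
      (convex_convexHull ℝ _) hEne f (hfc.mono hEcube)
      (fun x hx => hfp x (hEcube hx))
      (by
        intro p q
        cases hsi : s (Sum.inl (p, q)) with
        | true =>
          left
          intro x hx
          have := hKmem x hx (Sum.inl (p, q))
          simp only [hDor, hsi, if_true] at this
          rw [hDcf p q x] at this
          linarith
        | false =>
          right
          intro x hx
          have := hKmem x hx (Sum.inl (p, q))
          simp only [hDor, hsi, Bool.false_eq_true, if_false] at this
          rw [hDneg (Sum.inl (p, q)) x, hDcf p q x] at this
          linarith)
    obtain ⟨jg, hjg⟩ := select Ag Bg (convexHull ℝ (↑T : Set (Fin k → ℝ)))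
      (convex_convexHull ℝ _) hEne g (hgc.mono hEcube)
      (fun x hx => hgp x (hEcube hx))
      (by
        intro p q
        cases hsi : s (Sum.inr (p, q)) with
        | true =>
          left
          intro x hx
          have := hKmem x hx (Sum.inr (p, q))
          simp only [hDor, hsi, if_true] at this
          rw [hDcg p q x] at this
          linarith
        | false =>
          right
          intro x hx
          have := hKmem x hx (Sum.inr (p, q))
          simp only [hDor, hsi, Bool.false_eq_true, if_false] at this
          rw [hDneg (Sum.inr (p, q)) x, hDcg p q x] at this
          linarith)
    -- apply the vertex bound
    obtain ⟨c, hc0, hc⟩ := vertexBound T (Af jf) (Bf jf) (Ag jg) (Bg jg)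
      (fun x hx => by rw [← hjg x hx]; exact (hgr x (hEcube hx)).2)
      (fun x hx h1 => by
        rw [← hjg x hx] at h1
        rw [← hjf x hx]
        exact hone x (hEP hx) h1)
    refine ⟨c, hc0, fun x hx => ?_⟩
    have hxE : x ∈ convexHull ℝ (↑T : Set (Fin k → ℝ)) := by rw [hE]; exact hx
    have := hc x hxE
    rw [← hjf x hxE, ← hjg x hxE] at this
    exact this
  -- assemble
  choose cfun hcfun0 hcfun using hcells
  obtain ⟨cmax, hcmax⟩ := Finite.exists_le cfun
  obtain ⟨n0, hn0⟩ := exists_nat_ge cmax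
  refine ⟨n0 + 1, Nat.succ_pos n0, fun x hx => ?_⟩
  have hxcube : x ∈ unitCube k := hPc hx
  have hgx1 : g x ≤ 1 := (hgr x hxcube).2
  have hfx0 : 0 ≤ f x := (hfr x hxcube).1
  -- find the piece of P containing x and the sign pattern of x
  have hx' := hx
  rw [hPeq] at hx'
  obtain ⟨j0, hj0⟩ := Set.mem_iUnion.mp hx'
  set s : σ → Bool := fun i => decide (lineval (Dc i).1 (Dc i).2 x ≤ 0) with hs
  have hxK : x ∈ K s := by
    intro i
    cases hsi : s i with
    | true =>
      have h : lineval (Dc i).1 (Dc i).2 x ≤ 0 := by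
        have := hsi
        rw [hs] at this
        exact of_decide_eq_true this
      simp only [hDor, hsi, if_true]
      exact h
    | false =>
      have h : ¬ lineval (Dc i).1 (Dc i).2 x ≤ 0 := by
        have := hsi
        rw [hs] at this
        exact of_decide_eq_false this
      simp only [hDor, hsi, Bool.false_eq_true, if_false]
      rw [hDneg i x]
      push_neg at h
      linarith
  have hineq : 1 - f x ≤ cfun (j0, s) * (1 - g x) := hcfun (j0, s) x ⟨hj0, hxK⟩
  have hcn : cfun (j0, s) ≤ (n0 + 1 : ℕ) := by
    have := hcmax (j0, s)
    push_cast
    linarith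
  have hineq2 : 1 - f x ≤ ((n0 + 1 : ℕ) : ℝ) * (1 - g x) := by
    calc 1 - f x ≤ cfun (j0, s) * (1 - g x) := hineq
      _ ≤ ((n0 + 1 : ℕ) : ℝ) * (1 - g x) :=
        mul_le_mul_of_nonneg_right hcn (by linarith)
  calc opow (g x) (n0 + 1) ≤ max 0 (1 - (n0 + 1 : ℕ) * (1 - g x)) := opow_le (g x) hgx1 _
    _ ≤ f x := max_le hfx0 (by linarith)
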